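/- If β in (1,2) is a univoque Parry number, i.e., 1 has a unique representation 1 = Σ_{n≥1} s_n β^{−n} with s_n ∈ {0,1} and this representation (the greedy expansion) is eventually periodic, and β is an algebraic integer, then β is a unit: the constant term of its minimal polynomial over ℤ is ±1. -/

import Mathlib

open Finset

section AuxUnivoque

variable {β : ℝ}

private lemma digit_summable (h1 : 1 < β) (d : ℕ → ℕ) (hd : ∀ n, d n ≤ 1) :
    Summable (fun n => (d n : ℝ) / β ^ (n + 1)) := by
  have hβ0 : (0:ℝ) < β := lt_trans one_pos h1
  have hr0 : (0:ℝ) ≤ β⁻¹ := by positivity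
  have hr1 : β⁻¹ < 1 := by rw [inv_lt_one_iff₀]; right; exact h1
  have hgeo : Summable (fun n : ℕ => β⁻¹ ^ n) := summable_geometric_of_lt_one hr0 hr1
  refine Summable.of_nonneg_of_le (fun n => by positivity) (fun n => ?_) hgeo
  have hdn : (d n : ℝ) ≤ 1 := by exact_mod_cast hd n
  have hp : (0:ℝ) < β ^ (n+1) := by positivity
  rw [div_le_iff₀ hp]
  have hkey : β⁻¹ ^ n * β ^ (n+1) = β := by
    rw [inv_pow, pow_succ, ← mul_assoc, inv_mul_cancel₀ (by positivity), one_mul]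
  rw [hkey]
  linarith

private lemma tail_factor (h1 : 1 < β) (f : ℕ → ℝ) (k : ℕ) :
    ∑' m, f m / β ^ (m + k + 1) = (β ^ k)⁻¹ * ∑' m, f m / β ^ (m + 1) := by
  have hβ0 : (0:ℝ) < β := lt_trans one_pos h1
  rw [← tsum_mul_left]
  apply tsum_congr
  intro m
  have h1' : β ^ (m + k + 1) = β ^ k * β ^ (m + 1) := by
    rw [← pow_add]; congr 1; omega
  rw [h1']
  have h2 : (β:ℝ)^k ≠ 0 := by positivity
  have h3 : (β:ℝ)^(m+1) ≠ 0 := by positivity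
  field_simp

private lemma tsum_one_div_pow (h1 : 1 < β) :
    ∑' n : ℕ, (1:ℝ) / β ^ (n + 1) = 1 / (β - 1) := by
  have hβ0 : (0:ℝ) < β := lt_trans one_pos h1
  have hr0 : (0:ℝ) ≤ β⁻¹ := by positivity
  have hr1 : β⁻¹ < 1 := by rw [inv_lt_one_iff₀]; right; exact h1
  have hgeo := tsum_geometric_of_lt_one hr0 hr1
  have hterm : ∀ n : ℕ, (1:ℝ) / β ^ (n+1) = β⁻¹ * β⁻¹ ^ n := by
    intro n
    rw [pow_succ, one_div, mul_inv, inv_pow]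
    ring
  rw [tsum_congr hterm, tsum_mul_left, hgeo]
  have hb1 : β - 1 ≠ 0 := by linarith
  field_simp

open Classical in
private noncomputable def greedyRem (β x : ℝ) : ℕ → ℝ
  | 0 => x
  | n + 1 => if 1 / β ^ (n + 1) ≤ greedyRem β x n
      then greedyRem β x n - 1 / β ^ (n + 1) else greedyRem β x n

open Classical in
private noncomputable def greedyDig (β x : ℝ) (n : ℕ) : ℕ :=
  if 1 / β ^ (n + 1) ≤ greedyRem β x n then 1 else 0

private lemma greedyRem_succ (β x : ℝ) (n : ℕ) : greedyRem β x (n+1) =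
    if 1 / β ^ (n + 1) ≤ greedyRem β x n
      then greedyRem β x n - 1 / β ^ (n + 1) else greedyRem β x n := rfl

private lemma greedy_expansion (h1 : 1 < β) (h2 : β < 2) {x : ℝ} (hx0 : 0 ≤ x)
    (hx1 : x ≤ 1 / (β - 1)) :
    ∃ u : ℕ → ℕ, (∀ n, u n ≤ 1) ∧ ∑' n : ℕ, (u n : ℝ) / β ^ (n + 1) = x := by
  classical
  have hβ0 : (0:ℝ) < β := lt_trans one_pos h1
  have hb1 : (0:ℝ) < β - 1 := by linarith
  refine ⟨greedyDig β x, fun n => ?_, ?_⟩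
  · unfold greedyDig; split <;> simp
  · have hinv : ∀ n, 0 ≤ greedyRem β x n ∧ greedyRem β x n ≤ 1 / β ^ n * (1 / (β - 1)) := by
      intro n
      induction n with
      | zero => exact ⟨hx0, by simpa [greedyRem] using hx1⟩
      | succ n ih =>
        obtain ⟨h0, hb⟩ := ih
        have hpow : (0:ℝ) < β ^ (n+1) := by positivity
        have hpn : (0:ℝ) < β ^ n := by positivity
        have hkey : 1 / β ^ n * (1/(β-1)) - 1 / β ^ (n+1) = 1 / β ^ (n+1) * (1/(β-1)) := by
          rw [pow_succ]
          field_simp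
          ring
        by_cases h : 1 / β ^ (n+1) ≤ greedyRem β x n
        · constructor
          · rw [greedyRem_succ, if_pos h]; linarith
          · rw [greedyRem_succ, if_pos h]; linarith
        · constructor
          · rw [greedyRem_succ, if_neg h]; exact h0
          · rw [greedyRem_succ, if_neg h]
            have hlt : greedyRem β x n < 1 / β ^ (n+1) := lt_of_not_ge h
            have hge : (1:ℝ) ≤ 1/(β-1) := by
              rw [le_div_iff₀ hb1]; linarith
            nlinarith [one_div_pos.mpr hpow]
    have hpart : ∀ n, ∑ i ∈ range n, (greedyDig β x i : ℝ) / β ^ (i+1) = x - greedyRem β x n := by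
      intro n
      induction n with
      | zero => simp [greedyRem]
      | succ n ih =>
        rw [sum_range_succ, ih]
        unfold greedyDig
        rw [greedyRem_succ]
        by_cases h : 1 / β ^ (n+1) ≤ greedyRem β x n
        · rw [if_pos h, if_pos h]; push_cast; ring
        · rw [if_neg h, if_neg h]; push_cast; ring
    have hlim : Filter.Tendsto (fun n => greedyRem β x n) Filter.atTop (nhds 0) := by
      have hr0 : (0:ℝ) ≤ β⁻¹ := by positivity
      have hr1 : β⁻¹ < 1 := by rw [inv_lt_one_iff₀]; right; exact h1
      have hg : Filter.Tendsto (fun n : ℕ => β⁻¹ ^ n * (1/(β-1))) Filter.atTop (nhds 0) := by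
        have := (tendsto_pow_atTop_nhds_zero_of_lt_one hr0 hr1).mul_const (1/(β-1))
        simpa using this
      refine squeeze_zero (fun n => (hinv n).1) (fun n => ?_) hg
      have hb := (hinv n).2
      rw [inv_pow]
      rw [one_div] at hb
      exact hb
    have hdig : ∀ n, greedyDig β x n ≤ 1 := by
      intro n; unfold greedyDig; split <;> simp
    have hsum : Summable (fun n => (greedyDig β x n : ℝ) / β ^ (n+1)) :=
      digit_summable h1 _ hdig
    have h1' : Filter.Tendsto (fun n => ∑ i ∈ range n, (greedyDig β x i : ℝ) / β ^ (i+1))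
        Filter.atTop (nhds x) := by
      have hx' : Filter.Tendsto (fun n => x - greedyRem β x n) Filter.atTop (nhds x) := by
        simpa using Filter.Tendsto.const_sub x hlim
      exact hx'.congr (fun n => (hpart n).symm)
    have h2' := hsum.hasSum.tendsto_sum_nat
    exact tendsto_nhds_unique h2' h1'

end AuxUnivoque

/-- A univoque Parry number in (1,2) which is an algebraic integer is a unit:
the constant term of its minimal polynomial over ℤ is ±1. -/
theorem univoque_parry_is_unit (β : ℝ) (h1 : 1 < β) (h2 : β < 2)
    (hint : IsIntegral ℤ β)
    (huniv : ∃! s : ℕ → ℕ, (∀ n, s n ≤ 1) ∧ ∑' n : ℕ, (s n : ℝ) / β ^ (n + 1) = 1)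
    (hparry : ∀ s : ℕ → ℕ,
      ((∀ n, s n ≤ 1) ∧ ∑' n : ℕ, (s n : ℝ) / β ^ (n + 1) = 1) →
      ∃ N T, 1 ≤ T ∧ ∀ n, N ≤ n → s (n + T) = s n) :
    (minpoly ℤ β).coeff 0 = 1 ∨ (minpoly ℤ β).coeff 0 = -1 := by
  classical
  obtain ⟨s, ⟨hs1, hs2⟩, huniq⟩ := huniv
  obtain ⟨N₀, T, hT, hper⟩ := hparry s ⟨hs1, hs2⟩
  have hβ0 : (0:ℝ) < β := by linarith
  have hβne : (β:ℝ) ≠ 0 := ne_of_gt hβ0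
  have hsum : Summable (fun n => (s n : ℝ) / β ^ (n + 1)) := digit_summable h1 s hs1
  have hPex : ∃ N : ℕ, ∀ n, N ≤ n → s (n + T) = s n := ⟨N₀, hper⟩
  set N := Nat.find hPex with hNdef
  have hPN : ∀ n, N ≤ n → s (n + T) = s n := Nat.find_spec hPex
  rcases Nat.eq_zero_or_pos N with hN0 | hNpos
  · -- purely periodic case: contradiction with uniqueness
    exfalso
    have hper0 : ∀ n, s (n + T) = s n := fun n => hPN n (by omega)
    have hperk : ∀ m q, s (m + q * T) = s m := by
      intro m q
      induction q with
      | zero => simp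
      | succ q ih =>
        have h' := hper0 (m + q * T)
        rw [show m + (q+1) * T = m + q * T + T from by ring, h', ih]
    have hz : ∃ j, j < T ∧ s j = 0 := by
      by_contra hcon
      push_neg at hcon
      have hall : ∀ n, s n = 1 := by
        intro n
        have e1 : s (n % T + (n / T) * T) = s (n % T) := hperk _ _
        have e2 : n % T + (n / T) * T = n := Nat.mod_add_div' n T
        have e3 : s (n % T) ≠ 0 := hcon (n % T) (Nat.mod_lt _ (by omega))
        have e4 := hs1 n
        rw [e2] at e1
        omega
      have hgeo := tsum_one_div_pow h1
      have heq : ∑' n : ℕ, (s n : ℝ) / β ^ (n + 1) = 1 / (β - 1) := by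
        rw [← hgeo]
        exact tsum_congr (fun n => by rw [hall n]; norm_num)
      rw [hs2] at heq
      have hb1 : (0:ℝ) < β - 1 := by linarith
      rw [eq_div_iff (ne_of_gt hb1)] at heq
      nlinarith
    set Z := (Finset.range T).filter (fun i => s i = 0) with hZdef
    have hZne : Z.Nonempty := by
      obtain ⟨j, hj, hj0⟩ := hz
      exact ⟨j, by simp [hZdef, hj, hj0]⟩
    set j := Z.max' hZne with hjdef
    have hjZ : j ∈ Z := Z.max'_mem hZne
    have hjT : j < T := Finset.mem_range.mp (Finset.mem_filter.mp hjZ).1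
    have hj0 : s j = 0 := by
      have := (Finset.mem_filter.mp hjZ).2
      simpa using this
    have hones : ∀ i, j < i → i < T → s i = 1 := by
      intro i hji hiT
      by_contra hi
      have hi0 : s i = 0 := by have := hs1 i; omega
      have hiZ : i ∈ Z := by simp [hZdef, hiT, hi0]
      have := Z.le_max' i hiZ
      omega
    set r := T - 1 - j with hrdef
    have hjr : j + 1 + r = T := by omega
    have hyjsumm : Summable (fun m => (s (m + (j+1)) : ℝ) / β ^ (m + 1)) :=
      digit_summable h1 _ (fun n => hs1 _)
    set yj := ∑' m : ℕ, (s (m + (j+1)) : ℝ) / β ^ (m + 1) with hyjdef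
    have hyjsplit : yj = (∑ i ∈ Finset.range r, (1:ℝ) / β ^ (i+1)) + (β ^ r)⁻¹ := by
      rw [hyjdef, ← Summable.sum_add_tsum_nat_add r hyjsumm]
      congr 1
      · apply Finset.sum_congr rfl
        intro i hi
        have hi' : i < r := Finset.mem_range.mp hi
        rw [hones (i + (j+1)) (by omega) (by omega)]
        norm_num
      · have e : ∀ m : ℕ, s (m + r + (j + 1)) = s m := by
          intro m
          rw [show m + r + (j+1) = m + T from by omega]
          exact hper0 m
        calc ∑' m : ℕ, (s (m + r + (j+1)) : ℝ) / β ^ (m + r + 1)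
            = ∑' m : ℕ, (s m : ℝ) / β ^ (m + r + 1) := tsum_congr (fun m => by rw [e m])
          _ = (β ^ r)⁻¹ * ∑' m : ℕ, (s m : ℝ) / β ^ (m + 1) := tail_factor h1 _ r
          _ = (β ^ r)⁻¹ := by rw [hs2, mul_one]
    have hkeyge : ∀ k : ℕ, (1:ℝ) ≤ (∑ i ∈ Finset.range k, (1:ℝ) / β ^ (i+1)) + (β ^ k)⁻¹ := by
      intro k
      induction k with
      | zero => simp
      | succ k ih =>
        rw [Finset.sum_range_succ]
        have hpk : (0:ℝ) < β ^ k := by positivity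
        have hpk1 : (0:ℝ) < β ^ (k+1) := by positivity
        have h2k : (β ^ k)⁻¹ ≤ (β ^ (k+1))⁻¹ * 2 := by
          rw [pow_succ, mul_inv]
          have hik : (0:ℝ) < (β ^ k)⁻¹ := by positivity
          have hβinv : (1:ℝ) ≤ β⁻¹ * 2 := by
            nlinarith [mul_pos (inv_pos.mpr hβ0) (show (0:ℝ) < 2 - β from by linarith),
              mul_inv_cancel₀ hβne]
          nlinarith
        have hod : (1:ℝ)/β^(k+1) = (β^(k+1))⁻¹ := one_div _
        linarith
    have hone_le : (1:ℝ) ≤ yj := by rw [hyjsplit]; exact hkeyge r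
    have hsum1 : Summable (fun n : ℕ => (1:ℝ) / β ^ (n+1)) := by
      simpa using digit_summable h1 (fun _ => 1) (fun _ => le_refl 1)
    have hyj_le : yj ≤ 1 / (β - 1) := by
      rw [← tsum_one_div_pow h1]
      refine Summable.tsum_le_tsum (fun m => ?_) hyjsumm hsum1
      gcongr
      exact_mod_cast hs1 _
    obtain ⟨u, hu1, hu2⟩ := greedy_expansion h1 h2 (x := yj - 1) (by linarith) (by linarith)
    set t : ℕ → ℕ := fun n => if n < j then s n else if n = j then 1 else u (n - (j+1)) with htdef
    have ht1 : ∀ n, t n ≤ 1 := by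
      intro n
      rw [htdef]
      dsimp only
      split
      · exact hs1 n
      · split
        · exact le_refl 1
        · exact hu1 _
    have htsumm : Summable (fun n => (t n : ℝ) / β ^ (n + 1)) := digit_summable h1 t ht1
    have hhead : ∀ n, n < j → t n = s n := by
      intro n hn; rw [htdef]; simp [hn]
    have htj : t j = 1 := by rw [htdef]; simp
    have htail : ∀ m : ℕ, t (m + (j+1)) = u m := by
      intro m
      have h1' : ¬ (m + (j+1) < j) := by omega
      have h2' : ¬ (m + (j+1) = j) := by omega
      rw [htdef]
      simp only [h1', h2', if_false]
      congr 1
      omega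
    have hsplit_s : (1:ℝ) = (∑ n ∈ Finset.range (j+1), (s n : ℝ)/β^(n+1)) + (β^(j+1))⁻¹ * yj := by
      have h' := (Summable.sum_add_tsum_nat_add (f := fun n => (s n : ℝ)/β^(n+1)) (j+1) hsum).symm
      rw [hs2] at h'
      have h'' : ∑' m : ℕ, (s (m + (j+1)) : ℝ)/β^(m + (j+1) + 1) = (β^(j+1))⁻¹ * yj :=
        tail_factor h1 (fun m => (s (m + (j+1)) : ℝ)) (j+1)
      rw [h''] at h'
      exact h'
    have hsplit_t : ∑' n, (t n : ℝ)/β^(n+1)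
        = (∑ n ∈ Finset.range (j+1), (t n : ℝ)/β^(n+1)) + (β^(j+1))⁻¹ * (yj - 1) := by
      rw [← Summable.sum_add_tsum_nat_add (j+1) htsumm]
      congr 1
      calc ∑' m : ℕ, (t (m + (j+1)) : ℝ)/β^(m + (j+1) + 1)
          = ∑' m : ℕ, (u m : ℝ)/β^(m + (j+1) + 1) := tsum_congr (fun m => by rw [htail m])
        _ = (β^(j+1))⁻¹ * ∑' m : ℕ, (u m : ℝ)/β^(m+1) := tail_factor h1 _ (j+1)
        _ = (β^(j+1))⁻¹ * (yj - 1) := by rw [hu2]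
    have hheads : ∑ n ∈ Finset.range (j+1), (t n : ℝ)/β^(n+1)
        = (∑ n ∈ Finset.range (j+1), (s n : ℝ)/β^(n+1)) + 1/β^(j+1) := by
      rw [Finset.sum_range_succ, Finset.sum_range_succ]
      rw [Finset.sum_congr rfl (fun n hn => by rw [hhead n (Finset.mem_range.mp hn)])]
      rw [htj, hj0]
      push_cast
      ring
    have ht2 : ∑' n, (t n : ℝ)/β^(n+1) = 1 := by
      rw [hsplit_t, hheads]
      have e : (β^(j+1))⁻¹ * (yj - 1) = (β^(j+1))⁻¹ * yj - 1/β^(j+1) := by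
        rw [one_div]; ring
      rw [e]
      linarith [hsplit_s]
    have heq := huniq t ⟨ht1, ht2⟩
    have hje := congrFun heq j
    rw [htj, hj0] at hje
    exact one_ne_zero hje
  · -- N ≥ 1 : build an integer polynomial with constant term ±1 vanishing at β
    set M := N - 1 with hMdef
    have hMN : N = M + 1 := by omega
    have hne : s (M + T) ≠ s M := by
      have hmin : ¬ ∀ n, M ≤ n → s (n + T) = s n := Nat.find_min hPex (by omega)
      by_contra he
      apply hmin
      intro n hn
      rcases eq_or_lt_of_le hn with h | h
      · rw [← h]; exact he
      · exact hPN n (by omega)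
    set SA := ∑ n ∈ Finset.range N, (s n : ℝ)/β^(n+1) with hSAdef
    set SB := ∑ k ∈ Finset.range T, (s (N + k) : ℝ)/β^(k+1) with hSBdef
    have hysumm : Summable (fun m => (s (m + N) : ℝ)/β^(m+1)) :=
      digit_summable h1 _ (fun n => hs1 _)
    set y := ∑' m : ℕ, (s (m + N) : ℝ)/β^(m+1) with hydef
    have hsplit : (1:ℝ) = SA + (β^N)⁻¹ * y := by
      have h' := (Summable.sum_add_tsum_nat_add (f := fun n => (s n : ℝ)/β^(n+1)) N hsum).symm
      rw [hs2] at h'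
      have h'' : ∑' m : ℕ, (s (m + N) : ℝ)/β^(m + N + 1) = (β^N)⁻¹ * y :=
        tail_factor h1 (fun m => (s (m + N) : ℝ)) N
      rw [h''] at h'
      exact h'
    have hysplit : y = SB + (β^T)⁻¹ * y := by
      have h' := (Summable.sum_add_tsum_nat_add (f := fun m => (s (m + N) : ℝ)/β^(m+1)) T hysumm).symm
      have e : ∀ m : ℕ, s (m + T + N) = s (m + N) := by
        intro m
        have h'' := hPN (m + N) (by omega)
        rw [show m + N + T = m + T + N from by ring] at h''
        exact h''
      have htail2 : ∑' m : ℕ, (s (m + T + N) : ℝ)/β^(m + T + 1) = (β^T)⁻¹ * y :=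
        calc ∑' m : ℕ, (s (m + T + N) : ℝ)/β^(m + T + 1)
            = ∑' m : ℕ, (s (m + N) : ℝ)/β^(m + T + 1) := tsum_congr (fun m => by rw [e m])
          _ = (β^T)⁻¹ * y := tail_factor h1 _ T
      have hhead2 : (∑ i ∈ Finset.range T, (s (i + N) : ℝ)/β^(i+1)) = SB := by
        rw [hSBdef]
        exact Finset.sum_congr rfl (fun k _ => by rw [add_comm k N])
      calc y = ∑' m : ℕ, (s (m + N) : ℝ)/β^(m+1) := hydef
        _ = (∑ i ∈ Finset.range T, (s (i + N) : ℝ)/β^(i+1))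
              + ∑' m : ℕ, (s (m + T + N) : ℝ)/β^(m + T + 1) := h'
        _ = SB + (β^T)⁻¹ * y := by rw [htail2, hhead2]
    have hTpos : (0:ℝ) < β^T := by positivity
    have hNpos' : (0:ℝ) < β^N := by positivity
    have hyT : y * (β^T - 1) = β^T * SB := by
      have h' : β^T * y = β^T * SB + y := by
        calc β^T * y = β^T * (SB + (β^T)⁻¹ * y) := by rw [← hysplit]
          _ = β^T * SB + β^T * ((β^T)⁻¹ * y) := by ring
          _ = β^T * SB + y := by rw [← mul_assoc, mul_inv_cancel₀ (ne_of_gt hTpos), one_mul]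
      have e : y * (β^T - 1) = β^T * y - y := by ring
      rw [e, h']
      ring
    have hy1 : β^N * (1 - SA) = y := by
      have e : (1:ℝ) - SA = (β^N)⁻¹ * y := by linarith [hsplit]
      rw [e, ← mul_assoc, mul_inv_cancel₀ (ne_of_gt hNpos'), one_mul]
    set PA := ∑ n ∈ Finset.range N, (s n : ℝ) * β^(N-1-n) with hPAdef
    set PB := ∑ k ∈ Finset.range T, (s (N+k) : ℝ) * β^(T-1-k) with hPBdef
    have hPA : PA = β^N * SA := by
      rw [hPAdef, hSAdef, Finset.mul_sum]
      apply Finset.sum_congr rfl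
      intro n hn
      have hn' : n < N := Finset.mem_range.mp hn
      have hpne : (β:ℝ)^(n+1) ≠ 0 := by positivity
      have hpow : β^(N-1-n) * β^(n+1) = β^N := by rw [← pow_add]; congr 1; omega
      have hdiv : β^N / β^(n+1) = β^(N-1-n) := (div_eq_iff hpne).mpr hpow.symm
      calc (s n : ℝ) * β^(N-1-n) = (s n : ℝ) * (β^N / β^(n+1)) := by rw [hdiv]
        _ = β^N * ((s n : ℝ)/β^(n+1)) := by ring
    have hPB : PB = β^T * SB := by
      rw [hPBdef, hSBdef, Finset.mul_sum]
      apply Finset.sum_congr rfl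
      intro k hk
      have hk' : k < T := Finset.mem_range.mp hk
      have hpne : (β:ℝ)^(k+1) ≠ 0 := by positivity
      have hpow : β^(T-1-k) * β^(k+1) = β^T := by rw [← pow_add]; congr 1; omega
      have hdiv : β^T / β^(k+1) = β^(T-1-k) := (div_eq_iff hpne).mpr hpow.symm
      calc (s (N+k) : ℝ) * β^(T-1-k) = (s (N+k) : ℝ) * (β^T / β^(k+1)) := by rw [hdiv]
        _ = β^T * ((s (N+k) : ℝ)/β^(k+1)) := by ring
    have hmain : (β^N - PA) * (β^T - 1) - PB = 0 := by
      rw [hPA, hPB]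
      calc (β^N - β^N * SA) * (β^T - 1) - β^T * SB
          = (β^N * (1 - SA)) * (β^T - 1) - β^T * SB := by ring
        _ = y * (β^T - 1) - β^T * SB := by rw [hy1]
        _ = 0 := by rw [hyT]; ring
    set A : Polynomial ℤ :=
      ∑ n ∈ Finset.range N, Polynomial.C ((s n : ℤ)) * Polynomial.X ^ (N-1-n) with hAdef
    set B : Polynomial ℤ :=
      ∑ k ∈ Finset.range T, Polynomial.C ((s (N+k) : ℤ)) * Polynomial.X ^ (T-1-k) with hBdef
    set Q : Polynomial ℤ := (Polynomial.X ^ N - A) * (Polynomial.X ^ T - 1) - B with hQdef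
    have hAeval : Polynomial.aeval β A = PA := by
      rw [hAdef, map_sum, hPAdef]
      apply Finset.sum_congr rfl
      intro n _
      rw [map_mul, map_pow, Polynomial.aeval_C, Polynomial.aeval_X]
      simp only [algebraMap_int_eq, eq_intCast, Int.cast_natCast]
    have hBeval : Polynomial.aeval β B = PB := by
      rw [hBdef, map_sum, hPBdef]
      apply Finset.sum_congr rfl
      intro k _
      rw [map_mul, map_pow, Polynomial.aeval_C, Polynomial.aeval_X]
      simp only [algebraMap_int_eq, eq_intCast, Int.cast_natCast]
    have hQeval : Polynomial.aeval β Q = 0 := by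
      rw [hQdef]
      simp only [map_sub, map_mul, map_pow, map_one, Polynomial.aeval_X]
      rw [hAeval, hBeval]
      exact hmain
    have hA0 : A.eval 0 = (s M : ℤ) := by
      rw [hAdef, Polynomial.eval_finset_sum]
      rw [Finset.sum_eq_single M]
      · simp [show N - 1 - M = 0 from by omega]
      · intro b hb hbne
        have hb' : b < N := Finset.mem_range.mp hb
        simp [zero_pow (show N - 1 - b ≠ 0 from by omega)]
      · intro hM
        exact absurd (Finset.mem_range.mpr (by omega)) hM
    have hB0 : B.eval 0 = (s (M + T) : ℤ) := by
      rw [hBdef, Polynomial.eval_finset_sum]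
      rw [Finset.sum_eq_single (T-1)]
      · rw [show N + (T-1) = M + T from by omega]
        simp [show T - 1 - (T-1) = 0 from by omega]
      · intro b hb hbne
        have hb' : b < T := Finset.mem_range.mp hb
        simp [zero_pow (show T - 1 - b ≠ 0 from by omega)]
      · intro hM
        exact absurd (Finset.mem_range.mpr (by omega)) hM
    have hQ0 : Q.coeff 0 = (s M : ℤ) - (s (M + T) : ℤ) := by
      rw [Polynomial.coeff_zero_eq_eval_zero, hQdef]
      simp only [Polynomial.eval_sub, Polynomial.eval_mul, Polynomial.eval_pow,
        Polynomial.eval_X, Polynomial.eval_one]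
      rw [hA0, hB0]
      rw [zero_pow (show N ≠ 0 from by omega), zero_pow (show T ≠ 0 from by omega)]
      ring
    have hdvd : minpoly ℤ β ∣ Q := minpoly.isIntegrallyClosed_dvd hint hQeval
    obtain ⟨R, hR⟩ := hdvd
    have hprod : (minpoly ℤ β).coeff 0 * R.coeff 0 = (s M : ℤ) - (s (M+T) : ℤ) := by
      rw [← Polynomial.mul_coeff_zero, ← hR, hQ0]
    have hpm : (s M : ℤ) - (s (M+T) : ℤ) = 1 ∨ (s M : ℤ) - (s (M+T) : ℤ) = -1 := by
      have e1 := hs1 M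
      have e2 := hs1 (M+T)
      omega
    have hunit : IsUnit ((minpoly ℤ β).coeff 0) := by
      rcases hpm with h | h
      · rw [h] at hprod
        exact IsUnit.of_mul_eq_one _ hprod
      · rw [h] at hprod
        have h2' : (minpoly ℤ β).coeff 0 * (- R.coeff 0) = 1 := by
          rw [mul_neg, hprod]; norm_num
        exact IsUnit.of_mul_eq_one _ h2'
    exact Int.isUnit_iff.mp hunit
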